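/- Let μ ∈ k^r with μ ≠ 0 and h ∈ R, and set α = Σ_i μ_i·dx_i/x_i + dh (a closed, 0-final dominant logarithmic 1-form with residual part Σ_i μ_i·dx_i/x_i). Define d_αξ = α ∧ ξ + dξ. Let ρ ∈ ℝ and let η be a logarithmic 1-form with ν_A(d_αη) ≥ ρ. Then η = θ + η̃ where ν_A(η̃) ≥ ρ and θ has the following form: there exists F ∈ R such that, if −μ ∉ ℤ_{≥0}^r, then θ = d_αF; and if −μ ∈ ℤ_{≥0}^r, then there exist an index i₀ with μ_{i₀} ≠ 0, a unit W ∈ R, and λ ∈ k^r such that θ = d_αF + x̃^{−μ}·(Σ_i λ_i·dx_i/x_i), where x̃_{i₀} = W·x_{i₀} and x̃_i = x_i for i ≠ i₀ (so x̃^{−μ} = W^{−μ_{i₀}}·x^{−μ} ∈ R). In all cases θ ∧ dθ = 0. -/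

import Mathlib

noncomputable section
open MvPowerSeries Classical

section Core

variable {k : Type} [Field k] {σ : Type}

/-- Weighted value of an exponent. -/
def wtG (W : σ → ℝ) (e : σ →₀ ℕ) : ℝ := e.sum fun i m => (m : ℝ) * W i

/-- Explicit value of a formal power series. -/
def nuG (W : σ → ℝ) (f : MvPowerSeries σ k) : EReal :=
  sInf {v : EReal | ∃ e : σ →₀ ℕ, MvPowerSeries.coeff e f ≠ 0 ∧ v = ((wtG W e : ℝ) : EReal)}

/-- Derivative operators: `x·∂/∂x` for logarithmic variables, `∂/∂y` for plain ones. -/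
def DopG (isLog : σ → Bool) (b : σ) (f : MvPowerSeries σ k) : MvPowerSeries σ k :=
  fun e => if isLog b then (e b : k) * MvPowerSeries.coeff e f
    else ((e b : k) + 1) * MvPowerSeries.coeff (e + Finsupp.single b 1) f

/-- The differential of a function as a logarithmic 1-form. -/
def dFnG (isLog : σ → Bool) (f : MvPowerSeries σ k) : σ → MvPowerSeries σ k :=
  fun b => DopG isLog b f

/-- Explicit value of a logarithmic 1-form. -/
def nu1G (W : σ → ℝ) (ω : σ → MvPowerSeries σ k) : EReal := ⨅ b, nuG W (ω b)

/-- Wedge of two 1-forms, as an alternating 2-tensor. -/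
def w2G (α β : σ → MvPowerSeries σ k) : σ → σ → MvPowerSeries σ k :=
  fun a b => α a * β b - α b * β a

/-- Exterior derivative of a 1-form, as an alternating 2-tensor. -/
def dF1G (isLog : σ → Bool) (ω : σ → MvPowerSeries σ k) : σ → σ → MvPowerSeries σ k :=
  fun a b => DopG isLog a (ω b) - DopG isLog b (ω a)

/-- Explicit value of a 2-form. -/
def nu2G (W : σ → ℝ) (Ω : σ → σ → MvPowerSeries σ k) : EReal := ⨅ a, ⨅ b, nuG W (Ω a b)

/-- Wedge of a 1-form with a 2-form, as an alternating 3-tensor. -/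
def w12G (θ : σ → MvPowerSeries σ k) (Ω : σ → σ → MvPowerSeries σ k) :
    σ → σ → σ → MvPowerSeries σ k :=
  fun a b c => θ a * Ω b c - θ b * Ω a c + θ c * Ω a b

/-- Explicit value of a 3-form. -/
def nu3G (W : σ → ℝ) (T : σ → σ → σ → MvPowerSeries σ k) : EReal :=
  ⨅ a, ⨅ b, ⨅ c, nuG W (T a b c)

/-- `f` is dominant at its own explicit value: the value is realized by a monomial
purely in the distinguished (`isX`) variables. -/
def DomAtG (W : σ → ℝ) (isX : σ → Prop) (f : MvPowerSeries σ k) : Prop :=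
  ∃ e : σ →₀ ℕ, (∀ i, ¬ isX i → e i = 0) ∧ MvPowerSeries.coeff e f ≠ 0 ∧
    ((wtG W e : ℝ) : EReal) = nuG W f

/-- `f` is `γ`-final dominant. -/
def FinalDomFnG (W : σ → ℝ) (isX : σ → Prop) (γ : ℝ) (f : MvPowerSeries σ k) : Prop :=
  nuG W f ≤ (γ : EReal) ∧ DomAtG W isX f

/-- A 1-form is dominant at its own explicit value: realized by a `dx_i/x_i`-coefficient. -/
def Dom1AtG (W : σ → ℝ) (isX : σ → Prop) (ω : σ → MvPowerSeries σ k) : Prop :=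
  ∃ i, isX i ∧ nuG W (ω i) = nu1G W ω ∧ DomAtG W isX (ω i)

/-- A 1-form is `γ`-final dominant. -/
def FinalDom1G (W : σ → ℝ) (isX : σ → Prop) (γ : ℝ) (ω : σ → MvPowerSeries σ k) : Prop :=
  nu1G W ω ≤ (γ : EReal) ∧ Dom1AtG W isX ω

end Core

abbrev Idx (r n : ℕ) := Sum (Fin r) (Fin n)

/-- The constant logarithmic 1-form `Σᵢ μᵢ · dxᵢ/xᵢ`. -/
def cFormM {k : Type} [Field k] {r n : ℕ} (μ : Fin r → k) :
    Idx r n → MvPowerSeries (Idx r n) k :=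
  fun b => match b with
  | Sum.inl i => MvPowerSeries.C (σ := Idx r n) (R := k) (μ i)
  | Sum.inr _ => 0

/-- `d_μ f = f·Σ μᵢ dxᵢ/xᵢ + df`. -/
def dMuFn {k : Type} [Field k] {r n : ℕ} (μ : Fin r → k) (f : MvPowerSeries (Idx r n) k) :
    Idx r n → MvPowerSeries (Idx r n) k :=
  fun b => cFormM μ b * f + DopG (fun s => s.isLeft) b f

/-- `d_μ η = (Σ μᵢ dxᵢ/xᵢ) ∧ η + dη` on 1-forms. -/
def dMu1 {k : Type} [Field k] {r n : ℕ} (μ : Fin r → k)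
    (η : Idx r n → MvPowerSeries (Idx r n) k) :
    Idx r n → Idx r n → MvPowerSeries (Idx r n) k :=
  fun a b => w2G (cFormM μ) η a b + dF1G (fun s => s.isLeft) η a b

/-- The monomial `x^m`. -/
def xpowM {k : Type} [Field k] {r n : ℕ} (m : Fin r → ℕ) : MvPowerSeries (Idx r n) k :=
  MvPowerSeries.monomial (R := k) (Finsupp.equivFunOnFinite.symm (Sum.elim m fun _ => 0)) 1

/-- The logarithmic 1-form `x^m · Σᵢ λᵢ dxᵢ/xᵢ`. -/
def midForm {k : Type} [Field k] {r n : ℕ} (m : Fin r → ℕ) (lam : Fin r → k) :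
    Idx r n → MvPowerSeries (Idx r n) k :=
  fun b => match b with
  | Sum.inl i => MvPowerSeries.C (σ := Idx r n) (R := k) (lam i) * xpowM m
  | Sum.inr _ => 0

/-- The closed 1-form `α = Σ μᵢ dxᵢ/xᵢ + dh`. -/
def alphaForm {k : Type} [Field k] {r n : ℕ} (μ : Fin r → k) (h : MvPowerSeries (Idx r n) k) :
    Idx r n → MvPowerSeries (Idx r n) k :=
  fun b => cFormM μ b + dFnG (fun s => s.isLeft) h b

/-- `d_α F = F·α + dF` on functions. -/
def dAlFn {k : Type} [Field k] {r n : ℕ} (α : Idx r n → MvPowerSeries (Idx r n) k)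
    (F : MvPowerSeries (Idx r n) k) : Idx r n → MvPowerSeries (Idx r n) k :=
  fun b => F * α b + DopG (fun s => s.isLeft) b F

/-- `d_α η = α ∧ η + dη` on 1-forms. -/
def dAl1 {k : Type} [Field k] {r n : ℕ} (α η : Idx r n → MvPowerSeries (Idx r n) k) :
    Idx r n → Idx r n → MvPowerSeries (Idx r n) k :=
  fun a b => w2G α η a b + dF1G (fun s => s.isLeft) η a b

/-- The 1-form `x̃^{m}·(Σ λᵢ dxᵢ/xᵢ)` with `x̃_{i₀} = W·x_{i₀}`, `x̃ᵢ = xᵢ` otherwise,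
i.e. with coefficients `λᵢ · W^{m i₀} · x^m`. -/
def midFormW {k : Type} [Field k] {r n : ℕ} (m : Fin r → ℕ) (i₀ : Fin r)
    (W : MvPowerSeries (Idx r n) k) (lam : Fin r → k) :
    Idx r n → MvPowerSeries (Idx r n) k :=
  fun b => match b with
  | Sum.inl i => MvPowerSeries.C (σ := Idx r n) (R := k) (lam i) * (W ^ (m i₀) * xpowM m)
  | Sum.inr _ => 0

set_option linter.unusedSectionVars false
set_option linter.unreachableTactic false
set_option linter.unusedTactic false
set_option maxHeartbeats 1000000

section Basics
variable {k : Type} [Field k] {σ : Type} [DecidableEq σ] (L : σ → Bool)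

lemma coeff_app (e : σ →₀ ℕ) (f : MvPowerSeries σ k) : MvPowerSeries.coeff e f = f e := rfl

lemma mul_coeff (f g : MvPowerSeries σ k) (e : σ →₀ ℕ) :
    (f * g) e = ∑ p ∈ Finset.HasAntidiagonal.antidiagonal e, f p.1 * g p.2 := MvPowerSeries.coeff_mul e f g

lemma add_coeff (f g : MvPowerSeries σ k) (e : σ →₀ ℕ) : (f + g) e = f e + g e := rfl
lemma sub_coeff (f g : MvPowerSeries σ k) (e : σ →₀ ℕ) : (f - g) e = f e - g e := rfl

lemma Dop_log {b : σ} (hb : L b = true) (f : MvPowerSeries σ k) (e : σ →₀ ℕ) :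
    DopG L b f e = (e b : k) * f e := by simp [DopG, hb, coeff_app]

lemma Dop_y {b : σ} (hb : L b = false) (f : MvPowerSeries σ k) (e : σ →₀ ℕ) :
    DopG L b f e = ((e b : k) + 1) * f (e + Finsupp.single b 1) := by simp [DopG, hb, coeff_app]

lemma Dop_add (b : σ) (f g : MvPowerSeries σ k) :
    DopG L b (f + g) = DopG L b f + DopG L b g := by
  funext e
  rcases hb : L b with _ | _
  · simp [add_coeff, Dop_y L hb]; ring
  · simp [add_coeff, Dop_log L hb]; ring

lemma Dop_sub (b : σ) (f g : MvPowerSeries σ k) :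
    DopG L b (f - g) = DopG L b f - DopG L b g := by
  funext e
  rcases hb : L b with _ | _
  · simp [sub_coeff, Dop_y L hb]; ring
  · simp [sub_coeff, Dop_log L hb]; ring

lemma Dop_C (b : σ) (c : k) : DopG L b (MvPowerSeries.C (σ := σ) (R := k) c) = 0 := by
  funext e
  rcases hb : L b with _ | _
  · rw [Dop_y L hb]
    have : (e + Finsupp.single b 1) ≠ 0 := by
      intro h
      have := DFunLike.congr_fun h b
      simp [Finsupp.single_apply] at this
    rw [show (MvPowerSeries.C (σ := σ) (R := k) c) (e + Finsupp.single b 1) = MvPowerSeries.coeff _ (MvPowerSeries.C (σ := σ) (R := k) c) from rfl]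
    rw [MvPowerSeries.coeff_C]
    simp [this]
    rfl
  · rw [Dop_log L hb]
    by_cases he : e = 0
    · simp [he]; rfl
    · rw [show (MvPowerSeries.C (σ := σ) (R := k) c) e = MvPowerSeries.coeff e (MvPowerSeries.C (σ := σ) (R := k) c) from rfl,
        MvPowerSeries.coeff_C]
      simp [he]; rfl

lemma Dop_C_mul (b : σ) (c : k) (f : MvPowerSeries σ k) :
    DopG L b (MvPowerSeries.C (σ := σ) (R := k) c * f) = MvPowerSeries.C (σ := σ) (R := k) c * DopG L b f := by
  funext e
  have hc : ∀ (e' : σ →₀ ℕ) (g : MvPowerSeries σ k), (MvPowerSeries.C (σ := σ) (R := k) c * g) e' = c * g e' :=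
    fun e' g => MvPowerSeries.coeff_C_mul e' g c
  rcases hb : L b with _ | _
  · rw [Dop_y L hb, hc, hc, Dop_y L hb]; ring
  · rw [Dop_log L hb, hc, hc, Dop_log L hb]; ring

end Basics


section Basics2
variable {k : Type} [Field k] {σ : Type} [DecidableEq σ] (L : σ → Bool)

lemma sum_AD_swap (e : σ →₀ ℕ) (F : (σ →₀ ℕ) → (σ →₀ ℕ) → k) :
    ∑ p ∈ Finset.HasAntidiagonal.antidiagonal e, F p.1 p.2 = ∑ p ∈ Finset.HasAntidiagonal.antidiagonal e, F p.2 p.1 := by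
  apply Finset.sum_nbij' (fun p => Prod.swap p) (fun p => Prod.swap p) <;>
    simp [Finset.HasAntidiagonal.mem_antidiagonal, add_comm]

lemma shiftsum (b : σ) (e : σ →₀ ℕ) (f g : MvPowerSeries σ k) :
    ∑ p ∈ Finset.HasAntidiagonal.antidiagonal (e + Finsupp.single b 1 : σ →₀ ℕ), (p.2 b : k) * (f p.1 * g p.2)
      = ∑ p ∈ Finset.HasAntidiagonal.antidiagonal e, ((p.2 b : k) + 1) * (f p.1 * g (p.2 + Finsupp.single b 1)) := by
  symm
  refine Finset.sum_bij_ne_zero (fun p _ _ => (p.1, p.2 + Finsupp.single b 1)) ?_ ?_ ?_ ?_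
  · intro p hp _
    rw [Finset.HasAntidiagonal.mem_antidiagonal] at hp ⊢
    rw [← add_assoc, hp]
  · intro p₁ h₁ h₁' p₂ h₂ h₂' hh
    rw [Prod.ext_iff] at hh ⊢
    exact ⟨hh.1, add_right_cancel hh.2⟩
  · intro q hq hq0
    have hqb : q.2 b ≠ 0 := by
      intro h0; apply hq0; simp [h0]
    have hle : Finsupp.single b 1 ≤ q.2 := by
      rw [Finsupp.single_le_iff]; omega
    have hsub : q.2 - Finsupp.single b 1 + Finsupp.single b 1 = q.2 := tsub_add_cancel_of_le hle
    rw [Finset.HasAntidiagonal.mem_antidiagonal] at hq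
    have hmem : (q.1, q.2 - Finsupp.single b 1) ∈ Finset.HasAntidiagonal.antidiagonal e := by
      rw [Finset.HasAntidiagonal.mem_antidiagonal]
      have : q.1 + (q.2 - Finsupp.single b 1) + Finsupp.single b 1 = e + Finsupp.single b 1 := by
        rw [add_assoc, hsub, hq]
      exact add_right_cancel this
    have happ : (((q.2 - Finsupp.single b 1 : σ →₀ ℕ)) b : k) + 1 = (q.2 b : k) := by
      have : ((q.2 - Finsupp.single b 1 : σ →₀ ℕ)) b = q.2 b - 1 := by
        simp [Finsupp.tsub_apply, Finsupp.single_apply]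
      rw [this]
      have : (q.2 b - 1) + 1 = q.2 b := by omega
      exact_mod_cast congrArg (Nat.cast : ℕ → k) this
    refine ⟨(q.1, q.2 - Finsupp.single b 1), hmem, ?_, ?_⟩
    · have h5 : ((q.2 b - 1 : ℕ) : k) + 1 = (q.2 b : k) := by
        have h6 : (q.2 b - 1) + 1 = q.2 b := by omega
        exact_mod_cast congrArg (Nat.cast : ℕ → k) h6
      simpa [hsub, h5] using hq0
    · simp [hsub]
  · intro p hp h0
    have : ((p.2 + Finsupp.single b 1 : σ →₀ ℕ)) b = p.2 b + 1 := by
      simp [Finsupp.add_apply, Finsupp.single_apply]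
    simp [this]

lemma padd (e : σ →₀ ℕ) (p : (σ →₀ ℕ) × (σ →₀ ℕ)) (hp : p ∈ Finset.HasAntidiagonal.antidiagonal e) (b : σ) :
    p.1 b + p.2 b = e b := by
  rw [Finset.HasAntidiagonal.mem_antidiagonal] at hp
  rw [← hp]; simp

lemma Dop_mul (b : σ) (f g : MvPowerSeries σ k) :
    DopG L b (f * g) = f * DopG L b g + g * DopG L b f := by
  funext e
  rcases hb : L b with _ | _
  · -- y-variable case
    rw [add_coeff, mul_coeff, mul_coeff, Dop_y L hb, mul_coeff]
    have h1 : ∀ p ∈ Finset.HasAntidiagonal.antidiagonal e, f p.1 * DopG L b g p.2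
        = ((p.2 b : k) + 1) * (f p.1 * g (p.2 + Finsupp.single b 1)) := by
      intro p _; rw [Dop_y L hb]; ring
    have h2 : ∀ p ∈ Finset.HasAntidiagonal.antidiagonal e, g p.1 * DopG L b f p.2
        = ((p.2 b : k) + 1) * (g p.1 * f (p.2 + Finsupp.single b 1)) := by
      intro p _; rw [Dop_y L hb]; ring
    rw [Finset.sum_congr rfl h1, Finset.sum_congr rfl h2, ← shiftsum, ← shiftsum]
    have h3 : ∑ p ∈ Finset.HasAntidiagonal.antidiagonal (e + Finsupp.single b 1 : σ →₀ ℕ), (p.2 b : k) * (g p.1 * f p.2)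
        = ∑ p ∈ Finset.HasAntidiagonal.antidiagonal (e + Finsupp.single b 1 : σ →₀ ℕ), (p.1 b : k) * (f p.1 * g p.2) := by
      rw [sum_AD_swap (e + Finsupp.single b 1 : σ →₀ ℕ) (fun u v => (v b : k) * (g u * f v))]
      apply Finset.sum_congr rfl; intro p _; ring
    rw [h3, ← Finset.sum_add_distrib, Finset.mul_sum]
    apply Finset.sum_congr rfl
    intro p hp
    have := padd (e + Finsupp.single b 1 : σ →₀ ℕ) p hp b
    have hcast : (p.2 b : k) + (p.1 b : k) = (e b : k) + 1 := by
      have : p.2 b + p.1 b = e b + 1 := by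
        have h4 : ((e + Finsupp.single b 1 : σ →₀ ℕ)) b = e b + 1 := by
          simp [Finsupp.add_apply, Finsupp.single_apply]
        omega
      exact_mod_cast congrArg (Nat.cast : ℕ → k) this
    rw [show (p.2 b : k) * (f p.1 * g p.2) + (p.1 b:k) * (f p.1 * g p.2)
      = ((p.2 b:k) + (p.1 b:k)) * (f p.1 * g p.2) by ring, hcast]
  · -- log case
    rw [add_coeff, mul_coeff, mul_coeff, Dop_log L hb, mul_coeff]
    have h1 : ∀ p ∈ Finset.HasAntidiagonal.antidiagonal e, f p.1 * DopG L b g p.2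
        = (p.2 b : k) * (f p.1 * g p.2) := by
      intro p _; rw [Dop_log L hb]; ring
    have h2 : ∀ p ∈ Finset.HasAntidiagonal.antidiagonal e, g p.1 * DopG L b f p.2
        = (p.2 b : k) * (g p.1 * f p.2) := by
      intro p _; rw [Dop_log L hb]; ring
    rw [Finset.sum_congr rfl h1, Finset.sum_congr rfl h2]
    rw [sum_AD_swap e (fun u v => (v b : k) * (g u * f v))]
    rw [← Finset.sum_add_distrib, Finset.mul_sum]
    apply Finset.sum_congr rfl
    intro p hp
    have := padd e p hp b
    have hcast : (p.2 b : k) + (p.1 b : k) = (e b : k) := by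
      have : p.2 b + p.1 b = e b := by omega
      exact_mod_cast congrArg (Nat.cast : ℕ → k) this
    have : (p.2 b:k) * (f p.1 * g p.2) + (p.1 b:k) * (g p.2 * f p.1)
        = ((p.2 b:k) + (p.1 b:k)) * (f p.1 * g p.2) := by ring
    rw [this, hcast]

lemma Dop_comm (a b : σ) (f : MvPowerSeries σ k) :
    DopG L a (DopG L b f) = DopG L b (DopG L a f) := by
  funext e
  rcases ha : L a with _ | _ <;> rcases hbb : L b with _ | _
  · by_cases hab : a = b
    · subst hab; rfl
    · rw [Dop_y L ha, Dop_y L hbb, Dop_y L hbb, Dop_y L ha]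
      have h1 : ((e + Finsupp.single a 1 : σ →₀ ℕ)) b = e b := by
        simp [Finsupp.add_apply, Finsupp.single_apply, hab, Ne.symm hab]
      have h2 : ((e + Finsupp.single b 1 : σ →₀ ℕ)) a = e a := by
        simp [Finsupp.add_apply, Finsupp.single_apply, hab, Ne.symm hab]
      rw [h1, h2, add_right_comm]
      ring
  · rw [Dop_y L ha, Dop_log L hbb, Dop_log L hbb, Dop_y L ha]
    have h1 : ((e + Finsupp.single a 1 : σ →₀ ℕ)) b = e b := by
      by_cases hab : a = b
      · rw [hab] at ha; rw [ha] at hbb; cases hbb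
      · simp [Finsupp.add_apply, Finsupp.single_apply, hab, Ne.symm hab]
    rw [h1]; ring
  · rw [Dop_log L ha, Dop_y L hbb, Dop_y L hbb, Dop_log L ha]
    have h1 : ((e + Finsupp.single b 1 : σ →₀ ℕ)) a = e a := by
      by_cases hab : a = b
      · rw [hab] at ha; rw [ha] at hbb; cases hbb
      · simp [Finsupp.add_apply, Finsupp.single_apply, hab, Ne.symm hab]
    rw [h1]; ring
  · rw [Dop_log L ha, Dop_log L hbb, Dop_log L hbb, Dop_log L ha]; ring

end Basics2


section Basics3
variable {k : Type} [Field k] [CharZero k] {σ : Type} [DecidableEq σ] (L : σ → Bool)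

lemma Cmul_coeff (c : k) (f : MvPowerSeries σ k) (e : σ →₀ ℕ) :
    (MvPowerSeries.C (σ := σ) (R := k) c * f) e = c * f e := MvPowerSeries.coeff_C_mul e f c

lemma one_coeff (e : σ →₀ ℕ) : (1 : MvPowerSeries σ k) e = if e = 0 then 1 else 0 :=
  MvPowerSeries.coeff_one e

lemma Dop_one (L : σ → Bool) (b : σ) : DopG L b (1 : MvPowerSeries σ k) = 0 := by
  rw [← map_one (MvPowerSeries.C (σ := σ) (R := k))]; exact Dop_C L b 1

def degE (e : σ →₀ ℕ) : ℕ := e.sum fun _ m => m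

lemma degE_add (a b : σ →₀ ℕ) : degE (a + b) = degE a + degE b :=
  Finsupp.sum_add_index' (fun _ => rfl) (fun _ _ _ => rfl)

lemma degE_pos {e : σ →₀ ℕ} (he : e ≠ 0) : 1 ≤ degE e := by
  have : ∃ s, e s ≠ 0 := by
    by_contra hc; push_neg at hc; exact he (Finsupp.ext hc)
  obtain ⟨s, hs⟩ := this
  calc 1 ≤ e s := by omega
  _ ≤ degE e := Finset.single_le_sum (fun i _ => Nat.zero_le _) (Finsupp.mem_support_iff.mpr hs)

lemma degE_single (b : σ) : degE (Finsupp.single b 1) = 1 := by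
  unfold degE; rw [Finsupp.sum_single_index]; rfl

lemma pow_coeff_zero {g : MvPowerSeries σ k} (hg : g 0 = 0) :
    ∀ (N : ℕ) (e : σ →₀ ℕ), degE e < N → (g ^ N) e = 0 := by
  intro N
  induction N with
  | zero => intro e h; omega
  | succ N ih =>
    intro e h
    rw [pow_succ, mul_coeff]
    apply Finset.sum_eq_zero
    intro p hp
    rw [Finset.HasAntidiagonal.mem_antidiagonal] at hp
    by_cases h2 : p.2 = 0
    · rw [h2, hg, mul_zero]
    · have : degE p.1 + degE p.2 = degE e := by rw [← degE_add, hp]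
      have := degE_pos h2
      rw [ih p.1 (by omega), zero_mul]

def SS (g : MvPowerSeries σ k) (M : ℕ) : MvPowerSeries σ k :=
  ∑ N ∈ Finset.range (M + 1), MvPowerSeries.C (σ := σ) (R := k) ((N.factorial : k)⁻¹) * g ^ N

lemma sum_coeff {ι : Type*} (s : Finset ι) (f : ι → MvPowerSeries σ k) (e : σ →₀ ℕ) :
    (∑ i ∈ s, f i) e = ∑ i ∈ s, f i e := by
  rw [show (∑ i ∈ s, f i) e = MvPowerSeries.coeff e (∑ i ∈ s, f i) from rfl, map_sum]
  rfl

lemma SS_coeff_stable {g : MvPowerSeries σ k} (hg : g 0 = 0) {e : σ →₀ ℕ} {M : ℕ}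
    (hM : degE e ≤ M) : SS g M e = SS g (degE e) e := by
  unfold SS
  rw [sum_coeff, sum_coeff]
  symm
  apply Finset.sum_subset
  · exact Finset.range_subset_range.mpr (by omega)
  · intro N _ hN
    rw [Finset.mem_range] at hN
    rw [Cmul_coeff, pow_coeff_zero hg N e (by omega), mul_zero]

def ExpS (g : MvPowerSeries σ k) : MvPowerSeries σ k := fun e => SS g (degE e) e

lemma ExpS_coeff {g : MvPowerSeries σ k} (hg : g 0 = 0) {e : σ →₀ ℕ} {M : ℕ}
    (hM : degE e ≤ M) : ExpS g e = SS g M e := (SS_coeff_stable hg hM).symm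

lemma ExpS_zero (g : MvPowerSeries σ k) : ExpS g 0 = 1 := by
  show SS g (degE 0) 0 = 1
  have : degE (0 : σ →₀ ℕ) = 0 := rfl
  rw [this]
  unfold SS
  rw [sum_coeff, Finset.sum_range_one, Cmul_coeff, pow_zero, one_coeff]
  simp

lemma Dop_zero (b : σ) : DopG L b (0 : MvPowerSeries σ k) = 0 := by
  funext e
  rcases hb : L b with _ | _
  · rw [Dop_y L hb]; show _ * (0:k) = 0; ring
  · rw [Dop_log L hb]; show _ * (0:k) = 0; ring

lemma Dop_sum {ι : Type*} (b : σ) (s : Finset ι) (f : ι → MvPowerSeries σ k) :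
    DopG L b (∑ i ∈ s, f i) = ∑ i ∈ s, DopG L b (f i) := by
  classical
  induction s using Finset.cons_induction with
  | empty => simpa using Dop_zero L b
  | cons i s his ih => rw [Finset.sum_cons, Finset.sum_cons, Dop_add, ih]

lemma Dop_neg (b : σ) (f : MvPowerSeries σ k) : DopG L b (-f) = -DopG L b f := by
  have := Dop_sub L b 0 f
  simpa [Dop_zero] using this

lemma Dop_pow (b : σ) (g : MvPowerSeries σ k) (N : ℕ) :
    DopG L b (g ^ (N + 1)) = MvPowerSeries.C (σ := σ) (R := k) ((N : k) + 1) * (g ^ N * DopG L b g) := by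
  induction N with
  | zero => simp [map_one]
  | succ N ih =>
    rw [pow_succ, Dop_mul, ih, pow_succ]
    have hc : (((N+1 : ℕ)):k) + 1 = ((N:k) + 1) + 1 := by push_cast; ring
    rw [hc]
    simp only [map_add, map_one]
    ring

lemma Dop_SS (b : σ) (g : MvPowerSeries σ k) (M : ℕ) :
    DopG L b (SS g (M + 1)) = SS g M * DopG L b g := by
  unfold SS
  rw [Dop_sum]
  have key : ∀ N ∈ Finset.range (M + 2), DopG L b (MvPowerSeries.C (σ := σ) (R := k) ((N.factorial : k)⁻¹) * g ^ N)
      = if N = 0 then 0 else MvPowerSeries.C (σ := σ) (R := k) (((N-1).factorial : k)⁻¹) * g ^ (N-1) * DopG L b g := by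
    intro N _
    match N with
    | 0 => simp [pow_zero, Dop_C_mul, Dop_one]
    | (N+1) =>
      rw [Dop_C_mul, Dop_pow]
      rw [if_neg (Nat.succ_ne_zero N), Nat.add_sub_cancel]
      have hN1 : ((N:k) + 1) ≠ 0 := by
        have h7 : ((N + 1 : ℕ) : k) ≠ 0 := Nat.cast_ne_zero.mpr (Nat.succ_ne_zero N)
        push_cast at h7; exact h7
      have hNf : ((N.factorial : k)) ≠ 0 := Nat.cast_ne_zero.mpr (Nat.factorial_ne_zero N)
      have hfs : (((N+1).factorial : ℕ) : k) = ((N:k)+1) * (N.factorial : k) := by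
        rw [Nat.factorial_succ]; push_cast; ring
      have hc : (((N+1).factorial : ℕ) : k)⁻¹ * ((N:k)+1) = ((N.factorial : ℕ) : k)⁻¹ := by
        rw [hfs, mul_inv]
        field_simp
      rw [← mul_assoc, ← map_mul, hc, mul_assoc]
  rw [Finset.sum_congr rfl key, Finset.sum_range_succ']
  simp only [reduceIte, if_neg (Nat.succ_ne_zero _), Nat.add_sub_cancel, add_zero]
  rw [← Finset.sum_mul]

lemma Dop_ExpS (b : σ) {g : MvPowerSeries σ k} (hg : g 0 = 0) :
    DopG L b (ExpS g) = ExpS g * DopG L b g := by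
  funext e
  have key : ∀ e' : σ →₀ ℕ, degE e' ≤ degE e + 1 → ExpS g e' = SS g (degE e + 1) e' :=
    fun e' h => ExpS_coeff hg h
  have hmul : (SS g (degE e) * DopG L b g) e = (ExpS g * DopG L b g) e := by
    rw [mul_coeff, mul_coeff]
    apply Finset.sum_congr rfl
    intro p hp
    rw [Finset.HasAntidiagonal.mem_antidiagonal] at hp
    have : degE p.1 ≤ degE e := by
      have := degE_add p.1 p.2
      rw [hp] at this; omega
    rw [ExpS_coeff hg this]
  rcases hb : L b with _ | _
  · rw [Dop_y L hb, key _ (by rw [degE_add, degE_single])]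
    have : ((e b : k) + 1) * SS g (degE e + 1) (e + Finsupp.single b 1)
        = DopG L b (SS g (degE e + 1)) e := (Dop_y L hb _ e).symm
    rw [this, Dop_SS, hmul]
  · rw [Dop_log L hb, key _ (by omega)]
    have : (e b : k) * SS g (degE e + 1) e = DopG L b (SS g (degE e + 1)) e :=
      (Dop_log L hb _ e).symm
    rw [this, Dop_SS, hmul]

lemma mul_coeff_zero (f g : MvPowerSeries σ k) : (f * g) 0 = f 0 * g 0 := by
  rw [mul_coeff]
  rw [Finset.HasAntidiagonal.antidiagonal_zero]
  simp

lemma pow_coeff_zero' (f : MvPowerSeries σ k) (N : ℕ) : (f ^ N) 0 = (f 0) ^ N := by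
  induction N with
  | zero => rw [pow_zero, pow_zero, one_coeff]; simp
  | succ N ih => rw [pow_succ, pow_succ, mul_coeff_zero, ih]

lemma flat_vanish {U : MvPowerSeries σ k} (hU : ∀ b, DopG L b U = 0) :
    ∀ e : σ →₀ ℕ, e ≠ 0 → U e = 0 := by
  intro e he
  have hex : ∃ s, e s ≠ 0 := by
    by_contra hc; push_neg at hc; exact he (Finsupp.ext hc)
  obtain ⟨s, hs⟩ := hex
  rcases hLs : L s with _ | _
  · have h1 : Finsupp.single s 1 ≤ e := by rw [Finsupp.single_le_iff]; omega
    set e' := e - Finsupp.single s 1 with he'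
    have h2 : e' + Finsupp.single s 1 = e := tsub_add_cancel_of_le h1
    have h3 := congrFun (hU s) e'
    rw [Dop_y L hLs, h2] at h3
    have h4 : ((e' s : k) + 1) ≠ 0 := by
      have : ((e' s + 1 : ℕ) : k) ≠ 0 := Nat.cast_ne_zero.mpr (by omega)
      push_cast at this; exact this
    have h5 : (0 : MvPowerSeries σ k) e' = 0 := rfl
    rw [h5] at h3
    exact (mul_eq_zero.mp h3).resolve_left h4
  · have h3 := congrFun (hU s) e
    rw [Dop_log L hLs] at h3
    have h5 : (0 : MvPowerSeries σ k) e = 0 := rfl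
    rw [h5] at h3
    exact (mul_eq_zero.mp h3).resolve_left (Nat.cast_ne_zero.mpr hs)

lemma flat_one {U : MvPowerSeries σ k} (hU : ∀ b, DopG L b U = 0) (h0 : U 0 = 1) : U = 1 := by
  funext e
  by_cases he : e = 0
  · subst he; rw [h0]; rfl
  · rw [flat_vanish L hU e he]
    show (0:k) = MvPowerSeries.coeff e 1
    rw [MvPowerSeries.coeff_one, if_neg he]

end Basics3

section Basics4
variable {k : Type} [Field k] [CharZero k] {σ : Type} [DecidableEq σ]

lemma neg_coeff (f : MvPowerSeries σ k) (e : σ →₀ ℕ) : (-f) e = -(f e) := rfl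

lemma exp_mul_exp_neg (L : σ → Bool) {g : MvPowerSeries σ k} (hg : g 0 = 0) :
    ExpS g * ExpS (-g) = 1 := by
  have hng : (-g) 0 = 0 := by rw [neg_coeff, hg, neg_zero]
  apply flat_one L
  · intro b
    rw [Dop_mul, Dop_ExpS L b hg, Dop_ExpS L b hng, Dop_neg]
    ring
  · rw [mul_coeff_zero, ExpS_zero, ExpS_zero, one_mul]

lemma exp_root (L : σ → Bool) {g : MvPowerSeries σ k} (hg : g 0 = 0) (M : ℕ) :
    (ExpS (MvPowerSeries.C (σ := σ) (R := k) (-(((M+1 : ℕ) : k))⁻¹) * g)) ^ (M+1) * ExpS g = 1 := by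
  set c : k := -(((M+1 : ℕ) : k))⁻¹ with hc
  set g' : MvPowerSeries σ k := MvPowerSeries.C (σ := σ) (R := k) c * g with hg'def
  have hg' : g' 0 = 0 := by rw [hg'def, Cmul_coeff, hg, mul_zero]
  have hM1 : (((M+1 : ℕ)) : k) ≠ 0 := Nat.cast_ne_zero.mpr (Nat.succ_ne_zero M)
  apply flat_one L
  · intro b
    rw [Dop_mul, Dop_pow, Dop_ExpS L b hg, Dop_ExpS L b hg', Dop_C_mul]
    have hcc : MvPowerSeries.C (σ := σ) (R := k) ((M : k) + 1) * MvPowerSeries.C (σ := σ) (R := k) c = -1 := by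
      rw [← map_mul]
      have : ((M : k) + 1) * c = -1 := by
        rw [hc]
        push_cast at hM1 ⊢
        rw [mul_neg, mul_inv_cancel₀ hM1]
      rw [this, map_neg, map_one]
    linear_combination (ExpS g * ((ExpS g')^M * ExpS g') * DopG L b g) * hcc
  · rw [mul_coeff_zero, pow_coeff_zero', ExpS_zero, ExpS_zero, one_pow, one_mul]

end Basics4

section Basics5
variable {k : Type} [Field k] {σ : Type} [DecidableEq σ] (W : σ → ℝ)

lemma wt_add (a b : σ →₀ ℕ) : wtG W (a + b) = wtG W a + wtG W b :=
  Finsupp.sum_add_index' (fun a => by simp) (fun a m₁ m₂ => by push_cast; ring)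

lemma wt_single (b : σ) (n : ℕ) : wtG W (Finsupp.single b n) = n * W b := by
  unfold wtG
  rw [Finsupp.sum_single_index]
  simp

lemma wt_nonneg (hW : ∀ s, 0 ≤ W s) (e : σ →₀ ℕ) : 0 ≤ wtG W e :=
  Finset.sum_nonneg fun i _ => mul_nonneg (Nat.cast_nonneg _) (hW i)

lemma nuG_ge_iff (ρ : ℝ) (f : MvPowerSeries σ k) :
    (ρ : EReal) ≤ nuG W f ↔ ∀ e, wtG W e < ρ → f e = 0 := by
  constructor
  · intro hg e hlt
    by_contra h0
    have h1 : nuG W f ≤ ((wtG W e : ℝ) : EReal) :=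
      sInf_le ⟨e, by rw [coeff_app]; exact h0, rfl⟩
    have h2 := le_trans hg h1
    rw [EReal.coe_le_coe_iff] at h2
    linarith
  · intro hv
    apply le_sInf
    rintro x ⟨e, he, rfl⟩
    rw [EReal.coe_le_coe_iff]
    by_contra hcon
    push_neg at hcon
    apply he
    rw [coeff_app]
    exact hv e hcon

lemma nu1G_ge_iff (ρ : ℝ) (ω : σ → MvPowerSeries σ k) :
    (ρ : EReal) ≤ nu1G W ω ↔ ∀ b e, wtG W e < ρ → ω b e = 0 := by
  unfold nu1G
  rw [le_iInf_iff]
  exact forall_congr' fun b => nuG_ge_iff W ρ (ω b)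

lemma nu2G_ge_iff (ρ : ℝ) (Ω : σ → σ → MvPowerSeries σ k) :
    (ρ : EReal) ≤ nu2G W Ω ↔ ∀ a b e, wtG W e < ρ → Ω a b e = 0 := by
  unfold nu2G
  rw [le_iInf_iff]
  refine forall_congr' fun a => ?_
  rw [le_iInf_iff]
  exact forall_congr' fun b => nuG_ge_iff W ρ (Ω a b)

lemma app_add_single (e : σ →₀ ℕ) (a b : σ) :
    ((e + Finsupp.single a 1 : σ →₀ ℕ)) b = e b + (if a = b then 1 else 0) := by
  rw [Finsupp.add_apply, Finsupp.single_apply]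

lemma app_sub_single (e : σ →₀ ℕ) (a b : σ) :
    ((e - Finsupp.single a 1 : σ →₀ ℕ)) b = e b - (if a = b then 1 else 0) := by
  rw [Finsupp.tsub_apply, Finsupp.single_apply]

lemma sub_add_cancel_single {e : σ →₀ ℕ} {a : σ} (h : e a ≠ 0) :
    (e - Finsupp.single a 1) + Finsupp.single a 1 = e :=
  tsub_add_cancel_of_le (by rw [Finsupp.single_le_iff]; omega)

lemma add_sub_cancel_single (e : σ →₀ ℕ) (a : σ) :
    (e + Finsupp.single a 1) - Finsupp.single a 1 = e := by
  ext s
  rw [app_sub_single, app_add_single]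
  omega

lemma sub_add_single_comm (e : σ →₀ ℕ) {a b : σ} (hab : a ≠ b) :
    (e - Finsupp.single a 1) + Finsupp.single b 1
      = (e + Finsupp.single b 1) - Finsupp.single a 1 := by
  ext s
  rw [app_add_single, app_sub_single, app_sub_single, app_add_single]
  by_cases h1 : a = s <;> by_cases h2 : b = s
  · exact absurd (h1.trans h2.symm) hab
  all_goals simp [h1, h2] <;> omega

end Basics5

section Struct
variable {k : Type} [Field k] [CharZero k] {r n : ℕ}


def EmE {r n : ℕ} (m : Fin r → ℕ) : Idx r n →₀ ℕ :=
  Finsupp.equivFunOnFinite.symm (Sum.elim m fun _ => 0)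

lemma EmE_inl (m : Fin r → ℕ) (i : Fin r) : EmE (n := n) m (Sum.inl i) = m i := by
  simp [EmE]

lemma EmE_inr (m : Fin r → ℕ) (j : Fin n) : EmE (r := r) m (Sum.inr j) = 0 := by
  simp [EmE]

lemma xpow_coeff (m : Fin r → ℕ) (e : Idx r n →₀ ℕ) :
    (xpowM (k := k) m) e = if e = EmE m then 1 else 0 :=
  MvPowerSeries.coeff_monomial e _ 1

lemma Dop_cForm (μ : Fin r → k) (a b : Idx r n) (F : MvPowerSeries (Idx r n) k) :
    DopG (fun s : Idx r n => s.isLeft) a (cFormM μ b * F) = cFormM μ b * DopG (fun s : Idx r n => s.isLeft) a F := by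
  rcases b with i | j
  · exact Dop_C_mul (fun s : Idx r n => s.isLeft) a (μ i) F
  · show DopG (fun s : Idx r n => s.isLeft) a (0 * F) = 0 * DopG (fun s : Idx r n => s.isLeft) a F
    rw [zero_mul, zero_mul, Dop_zero]

lemma dMu1_ddF (μ : Fin r → k) (F : MvPowerSeries (Idx r n) k) (a b : Idx r n) :
    dMu1 μ (dMuFn μ F) a b = 0 := by
  unfold dMu1 w2G dF1G dMuFn
  rw [Dop_add, Dop_add, Dop_cForm, Dop_cForm, Dop_comm (fun s : Idx r n => s.isLeft) a b]
  ring

lemma Dop_xpow_log (m : Fin r → ℕ) (i : Fin r) :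
    DopG (fun s : Idx r n => s.isLeft) (Sum.inl i) (xpowM (k := k) (n := n) m)
      = MvPowerSeries.C (σ := Idx r n) (R := k) ((m i : k)) * xpowM m := by
  funext e
  rw [Dop_log (fun s : Idx r n => s.isLeft) (b := Sum.inl i) rfl, Cmul_coeff, xpow_coeff]
  by_cases he : e = EmE m
  · subst he; rw [if_pos rfl, EmE_inl]
  · rw [if_neg he]; ring

lemma Dop_xpow_y (m : Fin r → ℕ) (j : Fin n) :
    DopG (fun s : Idx r n => s.isLeft) (Sum.inr j) (xpowM (k := k) (r := r) m) = 0 := by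
  funext e
  rw [Dop_y (fun s : Idx r n => s.isLeft) (b := Sum.inr j) rfl, xpow_coeff]
  have : e + Finsupp.single (Sum.inr j) 1 ≠ EmE m := by
    intro hcon
    have := DFunLike.congr_fun hcon (Sum.inr j)
    rw [app_add_single, EmE_inr] at this
    simp at this
  rw [if_neg this, mul_zero]
  rfl

lemma dMu1_mid {μ : Fin r → k} {m : Fin r → ℕ} (hm : ∀ i, μ i = -((m i : ℕ) : k))
    (lam : Fin r → k) (a b : Idx r n) : dMu1 μ (midForm m lam) a b = 0 := by
  have hC : ∀ i : Fin r, MvPowerSeries.C (σ := Idx r n) (R := k) (μ i)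
      = -(MvPowerSeries.C (σ := Idx r n) (R := k) ((m i : k))) := by
    intro i; rw [hm i, map_neg]
  rcases a with i | j <;> rcases b with i' | j'
  · show cFormM μ (Sum.inl i) * (MvPowerSeries.C (R := k) (lam i') * xpowM m)
      - cFormM μ (Sum.inl i') * (MvPowerSeries.C (R := k) (lam i) * xpowM m)
      + (DopG (fun s : Idx r n => s.isLeft) (Sum.inl i) (MvPowerSeries.C (R := k) (lam i') * xpowM m)
        - DopG (fun s : Idx r n => s.isLeft) (Sum.inl i') (MvPowerSeries.C (R := k) (lam i) * xpowM m)) = 0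
    show MvPowerSeries.C (R := k) (μ i) * (MvPowerSeries.C (R := k) (lam i') * xpowM m)
      - MvPowerSeries.C (R := k) (μ i') * (MvPowerSeries.C (R := k) (lam i) * xpowM m)
      + (DopG (fun s : Idx r n => s.isLeft) (Sum.inl i) (MvPowerSeries.C (R := k) (lam i') * xpowM m)
        - DopG (fun s : Idx r n => s.isLeft) (Sum.inl i') (MvPowerSeries.C (R := k) (lam i) * xpowM m)) = 0
    rw [Dop_C_mul, Dop_C_mul, Dop_xpow_log, Dop_xpow_log, hC i, hC i']
    ring
  · show cFormM μ (Sum.inl i) * 0 - 0 * (MvPowerSeries.C (R := k) (lam i) * xpowM m)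
      + (DopG (fun s : Idx r n => s.isLeft) (Sum.inl i) (0 : MvPowerSeries (Idx r n) k)
        - DopG (fun s : Idx r n => s.isLeft) (Sum.inr j') (MvPowerSeries.C (R := k) (lam i) * xpowM m)) = 0
    rw [Dop_zero, Dop_C_mul, Dop_xpow_y]
    ring
  · show 0 * (MvPowerSeries.C (R := k) (lam i') * xpowM m) - cFormM μ (Sum.inl i') * 0
      + (DopG (fun s : Idx r n => s.isLeft) (Sum.inr j) (MvPowerSeries.C (R := k) (lam i') * xpowM m)
        - DopG (fun s : Idx r n => s.isLeft) (Sum.inl i') (0 : MvPowerSeries (Idx r n) k)) = 0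
    rw [Dop_zero, Dop_C_mul, Dop_xpow_y]
    ring
  · show (0:MvPowerSeries (Idx r n) k) * 0 - 0 * 0
      + (DopG (fun s : Idx r n => s.isLeft) (Sum.inr j) (0 : MvPowerSeries (Idx r n) k)
        - DopG (fun s : Idx r n => s.isLeft) (Sum.inr j') (0 : MvPowerSeries (Idx r n) k)) = 0
    rw [Dop_zero, Dop_zero]
    ring

lemma dMu1_add (μ : Fin r → k) (ω ω' : Idx r n → MvPowerSeries (Idx r n) k) (a b : Idx r n) :
    dMu1 μ (fun s => ω s + ω' s) a b = dMu1 μ ω a b + dMu1 μ ω' a b := by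
  unfold dMu1 w2G dF1G
  rw [Dop_add, Dop_add]
  ring

end Struct


section Struct2
variable {k : Type} [Field k] [CharZero k] {r n : ℕ}

lemma cForm_inl (μ : Fin r → k) (i : Fin r) :
    cFormM (n := n) μ (Sum.inl i) = MvPowerSeries.C (σ := Idx r n) (R := k) (μ i) := rfl
lemma cForm_inr (μ : Fin r → k) (j : Fin n) : cFormM (n := n) μ (Sum.inr j) = 0 := rfl

lemma Dop_inl (i : Fin r) (f : MvPowerSeries (Idx r n) k) (e : Idx r n →₀ ℕ) :
    DopG (fun s : Idx r n => s.isLeft) (Sum.inl i) f e = ((e (Sum.inl i) : ℕ) : k) * f e :=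
  Dop_log _ rfl f e

lemma Dop_inr (j : Fin n) (f : MvPowerSeries (Idx r n) k) (e : Idx r n →₀ ℕ) :
    DopG (fun s : Idx r n => s.isLeft) (Sum.inr j) f e
      = (((e (Sum.inr j) : ℕ) : k) + 1) * f (e + Finsupp.single (Sum.inr j) 1) :=
  Dop_y _ rfl f e

lemma conj2G (μ : Fin r → k) (h u : MvPowerSeries (Idx r n) k)
    (hDu : ∀ b, DopG (fun s : Idx r n => s.isLeft) b u
      = u * DopG (fun s : Idx r n => s.isLeft) b h)
    (η : Idx r n → MvPowerSeries (Idx r n) k) (a b : Idx r n) :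
    dMu1 μ (fun s => u * η s) a b = u * dAl1 (alphaForm μ h) η a b := by
  simp only [dMu1, dAl1, w2G, dF1G, alphaForm, dFnG]
  rw [Dop_mul, Dop_mul, hDu a, hDu b]
  ring

lemma conj1G (μ : Fin r → k) (h v : MvPowerSeries (Idx r n) k)
    (hDv : ∀ b, DopG (fun s : Idx r n => s.isLeft) b v
      = -(v * DopG (fun s : Idx r n => s.isLeft) b h))
    (θ : Idx r n → MvPowerSeries (Idx r n) k) (a b : Idx r n) :
    dAl1 (alphaForm μ h) (fun s => v * θ s) a b = v * dMu1 μ θ a b := by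
  simp only [dMu1, dAl1, w2G, dF1G, alphaForm, dFnG]
  rw [Dop_mul, Dop_mul, hDv a, hDv b]
  ring

lemma conj0G (μ : Fin r → k) (h v : MvPowerSeries (Idx r n) k)
    (hDv : ∀ b, DopG (fun s : Idx r n => s.isLeft) b v
      = -(v * DopG (fun s : Idx r n => s.isLeft) b h))
    (G : MvPowerSeries (Idx r n) k) (b : Idx r n) :
    dAlFn (alphaForm μ h) (v * G) b = v * dMuFn μ G b := by
  simp only [dAlFn, dMuFn, alphaForm, dFnG]
  rw [Dop_mul, hDv b]
  ring

lemma dMu1_coeff_xx (μ : Fin r → k) (ω : Idx r n → MvPowerSeries (Idx r n) k)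
    (i j : Fin r) (e : Idx r n →₀ ℕ) :
    dMu1 μ ω (Sum.inl i) (Sum.inl j) e
      = (μ i + ((e (Sum.inl i) : ℕ) : k)) * ω (Sum.inl j) e
        - (μ j + ((e (Sum.inl j) : ℕ) : k)) * ω (Sum.inl i) e := by
  show (w2G (cFormM μ) ω _ _ + dF1G _ ω _ _) e = _
  rw [add_coeff]
  unfold w2G dF1G
  rw [sub_coeff, sub_coeff, cForm_inl, cForm_inl, Cmul_coeff, Cmul_coeff, Dop_inl, Dop_inl]
  ring

lemma dMu1_coeff_xy (μ : Fin r → k) (ω : Idx r n → MvPowerSeries (Idx r n) k)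
    (i : Fin r) (j : Fin n) (e : Idx r n →₀ ℕ) :
    dMu1 μ ω (Sum.inl i) (Sum.inr j) e
      = (μ i + ((e (Sum.inl i) : ℕ) : k)) * ω (Sum.inr j) e
        - (((e (Sum.inr j) : ℕ) : k) + 1) * ω (Sum.inl i) (e + Finsupp.single (Sum.inr j) 1) := by
  show (w2G (cFormM μ) ω _ _ + dF1G _ ω _ _) e = _
  rw [add_coeff]
  unfold w2G dF1G
  rw [sub_coeff, sub_coeff, cForm_inl, cForm_inr, Cmul_coeff, zero_mul, Dop_inl, Dop_inr]
  show _ - (0 : MvPowerSeries (Idx r n) k) e + _ = _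
  rw [show (0 : MvPowerSeries (Idx r n) k) e = 0 from rfl]
  ring

lemma dMu1_coeff_yy (μ : Fin r → k) (ω : Idx r n → MvPowerSeries (Idx r n) k)
    (i j : Fin n) (e : Idx r n →₀ ℕ) :
    dMu1 μ ω (Sum.inr i) (Sum.inr j) e
      = (((e (Sum.inr i) : ℕ) : k) + 1) * ω (Sum.inr j) (e + Finsupp.single (Sum.inr i) 1)
        - (((e (Sum.inr j) : ℕ) : k) + 1) * ω (Sum.inr i) (e + Finsupp.single (Sum.inr j) 1) := by
  show (w2G (cFormM μ) ω _ _ + dF1G _ ω _ _) e = _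
  rw [add_coeff]
  unfold w2G dF1G
  rw [sub_coeff, sub_coeff, cForm_inr μ i, cForm_inr μ j, zero_mul, zero_mul, Dop_inr, Dop_inr]
  rw [show ((0 : MvPowerSeries (Idx r n) k)) e = (0:k) from rfl]
  ring

lemma dMuFn_coeff_inl (μ : Fin r → k) (F : MvPowerSeries (Idx r n) k) (i : Fin r)
    (e : Idx r n →₀ ℕ) :
    dMuFn μ F (Sum.inl i) e = (μ i + ((e (Sum.inl i) : ℕ) : k)) * F e := by
  show ((cFormM μ (Sum.inl i) * F + DopG (fun s : Idx r n => s.isLeft) (Sum.inl i) F : MvPowerSeries (Idx r n) k)) e = _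
  rw [add_coeff, cForm_inl, Cmul_coeff, Dop_inl]
  ring

lemma dMuFn_coeff_inr (μ : Fin r → k) (F : MvPowerSeries (Idx r n) k) (j : Fin n)
    (e : Idx r n →₀ ℕ) :
    dMuFn μ F (Sum.inr j) e
      = (((e (Sum.inr j) : ℕ) : k) + 1) * F (e + Finsupp.single (Sum.inr j) 1) := by
  show ((cFormM μ (Sum.inr j) * F + DopG (fun s : Idx r n => s.isLeft) (Sum.inr j) F : MvPowerSeries (Idx r n) k)) e = _
  rw [add_coeff, cForm_inr, zero_mul, Dop_inr]
  show (0 : MvPowerSeries (Idx r n) k) e + _ = _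
  rw [show (0 : MvPowerSeries (Idx r n) k) e = 0 from rfl]
  ring

lemma midForm_coeff_inl (m : Fin r → ℕ) (lam : Fin r → k) (i : Fin r) (e : Idx r n →₀ ℕ) :
    midForm m lam (Sum.inl i) e = lam i * (if e = EmE m then 1 else 0) := by
  show ((MvPowerSeries.C (σ := Idx r n) (R := k) (lam i) * xpowM m : MvPowerSeries (Idx r n) k)) e = _
  rw [Cmul_coeff, xpow_coeff]

lemma midForm_coeff_inr (m : Fin r → ℕ) (lam : Fin r → k) (j : Fin n) (e : Idx r n →₀ ℕ) :
    midForm (k := k) m lam (Sum.inr j) e = 0 := rfl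

lemma wtY (w : Fin r → ℝ) (e : Idx r n →₀ ℕ) (j : Fin n) :
    wtG (Sum.elim w fun _ => (0:ℝ)) (e + Finsupp.single (Sum.inr j) 1)
      = wtG (Sum.elim w fun _ => (0:ℝ)) e := by
  rw [wt_add, wt_single]
  simp

end Struct2

/-- truncated Poincaré lemma with respect to a closed `0`-final dominant
form `α = Σ μᵢ dxᵢ/xᵢ + dh` (`μ ≠ 0`): if `ν_A(d_α η) ≥ ρ` then `η = θ + η̃`,
`ν_A(η̃) ≥ ρ`, `θ ∧ dθ = 0`, and `θ` has the indicated normal form. -/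
theorem statement5 {k : Type} [Field k] [CharZero k] {r n : ℕ} (hr : 0 < r)
    (w : Fin r → ℝ) (hw : ∀ i, 0 < w i) (hind : LinearIndependent ℚ w)
    (μ : Fin r → k) (hμ : μ ≠ 0) (h : MvPowerSeries (Idx r n) k) (ρ : ℝ)
    (η : Idx r n → MvPowerSeries (Idx r n) k)
    (hint : (ρ : EReal) ≤ nu2G (Sum.elim w fun _ => (0:ℝ)) (dAl1 (alphaForm μ h) η)) :
    ∃ (θ ηt : Idx r n → MvPowerSeries (Idx r n) k) (F : MvPowerSeries (Idx r n) k),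
      (∀ b, η b = θ b + ηt b) ∧
      (ρ : EReal) ≤ nu1G (Sum.elim w fun _ => (0:ℝ)) ηt ∧
      (∀ a b c, w12G θ (dF1G (fun s => s.isLeft) θ) a b c = 0) ∧
      ((¬ ∃ m : Fin r → ℕ, ∀ i, μ i = - ((m i : ℕ) : k)) →
        ∀ b, θ b = dAlFn (alphaForm μ h) F b) ∧
      (∀ m : Fin r → ℕ, (∀ i, μ i = - ((m i : ℕ) : k)) →
        ∃ (i₀ : Fin r) (W : MvPowerSeries (Idx r n) k) (lam : Fin r → k),
          m i₀ ≠ 0 ∧ IsUnit W ∧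
          ∀ b, θ b = dAlFn (alphaForm μ h) F b + midFormW m i₀ W lam b) := by
  classical
  obtain ⟨i₀, hi₀⟩ : ∃ i, μ i ≠ 0 := by
    by_contra hc; push_neg at hc; exact hμ (funext hc)
  have hWnn : ∀ s : Idx r n, 0 ≤ (Sum.elim w fun _ => (0:ℝ)) s := by
    rintro (i | j)
    · exact (hw i).le
    · exact le_rfl
  have hwtY : ∀ (e : Idx r n →₀ ℕ) (jj : Fin n),
      wtG (Sum.elim w fun _ => (0:ℝ)) (e + Finsupp.single (Sum.inr jj) 1)
        = wtG (Sum.elim w fun _ => (0:ℝ)) e := fun e jj => wtY w e jj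
  -- exponential setup
  set h₀ : MvPowerSeries (Idx r n) k := h - MvPowerSeries.C (σ := Idx r n) (R := k) (h 0) with hh₀def
  have hh₀ : h₀ 0 = 0 := by
    rw [hh₀def, sub_coeff,
      show (MvPowerSeries.C (σ := Idx r n) (R := k) (h 0)) 0
          = MvPowerSeries.coeff (0 : Idx r n →₀ ℕ) (MvPowerSeries.C (σ := Idx r n) (R := k) (h 0)) from rfl,
      MvPowerSeries.coeff_zero_C]
    ring
  have hnegh₀ : (-h₀ : MvPowerSeries (Idx r n) k) 0 = 0 := by
    rw [neg_coeff, hh₀, neg_zero]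
  set u : MvPowerSeries (Idx r n) k := ExpS h₀ with hudef
  set v : MvPowerSeries (Idx r n) k := ExpS (-h₀) with hvdef
  have huv : u * v = 1 := exp_mul_exp_neg (fun s : Idx r n => s.isLeft) hh₀
  have hDh₀ : ∀ b, DopG (fun s : Idx r n => s.isLeft) b h₀
      = DopG (fun s : Idx r n => s.isLeft) b h := by
    intro b; rw [hh₀def, Dop_sub, Dop_C, sub_zero]
  have hDu : ∀ b, DopG (fun s : Idx r n => s.isLeft) b u
      = u * DopG (fun s : Idx r n => s.isLeft) b h := by
    intro b; rw [hudef, Dop_ExpS _ b hh₀, hDh₀]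
  have hDv : ∀ b, DopG (fun s : Idx r n => s.isLeft) b v
      = -(v * DopG (fun s : Idx r n => s.isLeft) b h) := by
    intro b; rw [hvdef, Dop_ExpS _ b hnegh₀, Dop_neg, hDh₀]; ring
  set η' : Idx r n → MvPowerSeries (Idx r n) k := fun b => u * η b with hη'def
  -- the key equations
  have hint' : ∀ a b e, wtG (Sum.elim w fun _ => (0:ℝ)) e < ρ →
      dAl1 (alphaForm μ h) η a b e = 0 :=
    fun a b e he => (nu2G_ge_iff _ ρ (dAl1 (alphaForm μ h) η)).mp hint a b e he
  have hkey : ∀ a b e, wtG (Sum.elim w fun _ => (0:ℝ)) e < ρ → dMu1 μ η' a b e = 0 := by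
    intro a b e hlt
    rw [hη'def, conj2G μ h u hDu η a b, mul_coeff]
    apply Finset.sum_eq_zero
    intro p hp
    rw [Finset.HasAntidiagonal.mem_antidiagonal] at hp
    have hwt : wtG (Sum.elim w fun _ => (0:ℝ)) p.2 < ρ := by
      have h1 := wt_add (Sum.elim w fun _ => (0:ℝ)) p.1 p.2
      rw [hp] at h1
      have h2 := wt_nonneg _ hWnn p.1
      linarith
    rw [hint' a b p.2 hwt, mul_zero]
  have hXX : ∀ (i j : Fin r) e, wtG (Sum.elim w fun _ => (0:ℝ)) e < ρ →
      (μ i + ((e (Sum.inl i) : ℕ) : k)) * η' (Sum.inl j) e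
        = (μ j + ((e (Sum.inl j) : ℕ) : k)) * η' (Sum.inl i) e := by
    intro i j e hlt
    have h0 := hkey (Sum.inl i) (Sum.inl j) e hlt
    rw [dMu1_coeff_xx] at h0
    linear_combination h0
  have hXY : ∀ (i : Fin r) (j : Fin n) e, wtG (Sum.elim w fun _ => (0:ℝ)) e < ρ →
      (μ i + ((e (Sum.inl i) : ℕ) : k)) * η' (Sum.inr j) e
        = (((e (Sum.inr j) : ℕ) : k) + 1) * η' (Sum.inl i) (e + Finsupp.single (Sum.inr j) 1) := by
    intro i j e hlt
    have h0 := hkey (Sum.inl i) (Sum.inr j) e hlt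
    rw [dMu1_coeff_xy] at h0
    linear_combination h0
  have hYY : ∀ (i j : Fin n) e, wtG (Sum.elim w fun _ => (0:ℝ)) e < ρ →
      (((e (Sum.inr i) : ℕ) : k) + 1) * η' (Sum.inr j) (e + Finsupp.single (Sum.inr i) 1)
        = (((e (Sum.inr j) : ℕ) : k) + 1) * η' (Sum.inr i) (e + Finsupp.single (Sum.inr j) 1) := by
    intro i j e hlt
    have h0 := hkey (Sum.inr i) (Sum.inr j) e hlt
    rw [dMu1_coeff_yy] at h0
    linear_combination h0
  -- the solution F'
  obtain ⟨F', hF'c⟩ : ∃ F' : MvPowerSeries (Idx r n) k, ∀ e : Idx r n →₀ ℕ,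
      F' e = if wtG (Sum.elim w fun _ => (0:ℝ)) e < ρ then
        (if H : ∃ i', μ i' + ((e (Sum.inl i') : ℕ) : k) ≠ 0 then
          (μ H.choose + ((e (Sum.inl H.choose) : ℕ) : k))⁻¹ * η' (Sum.inl H.choose) e
        else if H2 : ∃ j', e (Sum.inr j') ≠ 0 then
          (((e (Sum.inr H2.choose) : ℕ)) : k)⁻¹
            * η' (Sum.inr H2.choose) (e - Finsupp.single (Sum.inr H2.choose) 1)
        else 0)
      else 0 := ⟨_, fun e => rfl⟩
  -- verification, x-components, nonresonant slice
  have hver1 : ∀ (i : Fin r) (e : Idx r n →₀ ℕ), wtG (Sum.elim w fun _ => (0:ℝ)) e < ρ →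
      (∃ i', μ i' + ((e (Sum.inl i') : ℕ) : k) ≠ 0) →
      η' (Sum.inl i) e = (μ i + ((e (Sum.inl i) : ℕ) : k)) * F' e := by
    intro i e hlt H
    rw [hF'c e, if_pos hlt, dif_pos H]
    have hx := hXX i H.choose e hlt
    have hc := H.choose_spec
    have hcalc : (μ i + ((e (Sum.inl i) : ℕ) : k))
        * ((μ H.choose + ((e (Sum.inl H.choose) : ℕ) : k))⁻¹ * η' (Sum.inl H.choose) e)
        = η' (Sum.inl i) e := by
      calc (μ i + ((e (Sum.inl i) : ℕ) : k))
          * ((μ H.choose + ((e (Sum.inl H.choose) : ℕ) : k))⁻¹ * η' (Sum.inl H.choose) e)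
          = (μ H.choose + ((e (Sum.inl H.choose) : ℕ) : k))⁻¹
            * ((μ i + ((e (Sum.inl i) : ℕ) : k)) * η' (Sum.inl H.choose) e) := by ring
        _ = (μ H.choose + ((e (Sum.inl H.choose) : ℕ) : k))⁻¹
            * ((μ H.choose + ((e (Sum.inl H.choose) : ℕ) : k)) * η' (Sum.inl i) e) := by rw [hx]
        _ = η' (Sum.inl i) e := inv_mul_cancel_left₀ hc _
    exact hcalc.symm
  -- verification, x-components vanish on resonant slice away from corner
  have hverr : ∀ (i : Fin r) (e : Idx r n →₀ ℕ), wtG (Sum.elim w fun _ => (0:ℝ)) e < ρ →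
      (∀ i', μ i' + ((e (Sum.inl i') : ℕ) : k) = 0) →
      ∀ (j : Fin n), e (Sum.inr j) ≠ 0 → η' (Sum.inl i) e = 0 := by
    intro i e hlt hall j hj
    set e'' := e - Finsupp.single (Sum.inr j) 1 with he''def
    have he'' : e'' + Finsupp.single (Sum.inr j) 1 = e := sub_add_cancel_single hj
    have hlt'' : wtG (Sum.elim w fun _ => (0:ℝ)) e'' < ρ := by
      have h1 := hwtY e'' j
      rw [he''] at h1
      rw [← h1]; exact hlt
    have hx := hXY i j e'' hlt''
    rw [he''] at hx
    have h2 : e'' (Sum.inl i) = e (Sum.inl i) := by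
      rw [he''def, app_sub_single]; simp
    rw [h2, hall i, zero_mul] at hx
    have h3 : ((e'' (Sum.inr j) : ℕ) : k) + 1 ≠ 0 := by
      have : ((e'' (Sum.inr j) + 1 : ℕ) : k) ≠ 0 := Nat.cast_ne_zero.mpr (by omega)
      push_cast at this; exact this
    have := hx.symm
    rcases mul_eq_zero.mp this with hc | hc
    · exact absurd hc h3
    · exact hc
  -- verification, y-components
  have hver2 : ∀ (j : Fin n) (e : Idx r n →₀ ℕ), wtG (Sum.elim w fun _ => (0:ℝ)) e < ρ →
      η' (Sum.inr j) e = (((e (Sum.inr j) : ℕ) : k) + 1)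
        * F' (e + Finsupp.single (Sum.inr j) 1) := by
    intro j e hlt
    have hltp : wtG (Sum.elim w fun _ => (0:ℝ)) (e + Finsupp.single (Sum.inr j) 1) < ρ := by
      rw [hwtY e j]; exact hlt
    rw [hF'c _, if_pos hltp]
    have happx : ∀ i' : Fin r, ((e + Finsupp.single (Sum.inr j) 1 : Idx r n →₀ ℕ)) (Sum.inl i')
        = e (Sum.inl i') := by
      intro i'; rw [app_add_single]; simp
    by_cases H : ∃ i', μ i' + ((((e + Finsupp.single (Sum.inr j) 1 : Idx r n →₀ ℕ)) (Sum.inl i') : ℕ) : k) ≠ 0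
    · rw [dif_pos H]
      have hc := H.choose_spec
      rw [happx H.choose] at hc
      have hx := hXY H.choose j e hlt
      rw [happx H.choose]
      have hcalc : (((e (Sum.inr j) : ℕ) : k) + 1)
          * ((μ H.choose + ((e (Sum.inl H.choose) : ℕ) : k))⁻¹
            * η' (Sum.inl H.choose) (e + Finsupp.single (Sum.inr j) 1))
          = η' (Sum.inr j) e := by
        calc (((e (Sum.inr j) : ℕ) : k) + 1)
            * ((μ H.choose + ((e (Sum.inl H.choose) : ℕ) : k))⁻¹
              * η' (Sum.inl H.choose) (e + Finsupp.single (Sum.inr j) 1))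
            = (μ H.choose + ((e (Sum.inl H.choose) : ℕ) : k))⁻¹
              * ((((e (Sum.inr j) : ℕ) : k) + 1)
                * η' (Sum.inl H.choose) (e + Finsupp.single (Sum.inr j) 1)) := by ring
          _ = (μ H.choose + ((e (Sum.inl H.choose) : ℕ) : k))⁻¹
              * ((μ H.choose + ((e (Sum.inl H.choose) : ℕ) : k)) * η' (Sum.inr j) e) := by
                rw [← hx]
          _ = η' (Sum.inr j) e := inv_mul_cancel_left₀ hc _
      exact hcalc.symm
    · rw [dif_neg H]
      have H2 : ∃ j', ((e + Finsupp.single (Sum.inr j) 1 : Idx r n →₀ ℕ)) (Sum.inr j') ≠ 0 := by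
        refine ⟨j, ?_⟩
        rw [app_add_single]; simp
      rw [dif_pos H2]
      have hj₀ := H2.choose_spec
      by_cases hjj : H2.choose = j
      · rw [hjj] at hj₀ ⊢
        rw [add_sub_cancel_single]
        have hapj : ((e + Finsupp.single (Sum.inr j) 1 : Idx r n →₀ ℕ)) (Sum.inr j)
            = e (Sum.inr j) + 1 := by rw [app_add_single]; simp
        rw [hapj]
        have hpc : ((e (Sum.inr j) + 1 : ℕ) : k) = ((e (Sum.inr j) : ℕ) : k) + 1 := by
          push_cast; ring
        rw [hpc]
        have hne : ((e (Sum.inr j) : ℕ) : k) + 1 ≠ 0 := by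
          have h9 : ((e (Sum.inr j) + 1 : ℕ) : k) ≠ 0 := Nat.cast_ne_zero.mpr (by omega)
          rw [hpc] at h9; exact h9
        exact (mul_inv_cancel_left₀ hne _).symm
      · have hne2 : (Sum.inr H2.choose : Idx r n) ≠ Sum.inr j := by
          intro hcon; exact hjj (by injection hcon)
        have hapj0 : ((e + Finsupp.single (Sum.inr j) 1 : Idx r n →₀ ℕ)) (Sum.inr H2.choose)
            = e (Sum.inr H2.choose) := by
          rw [app_add_single]
          have h8 : (Sum.inr j : Idx r n) ≠ Sum.inr H2.choose :=
            fun hcon => hjj (Sum.inr.inj hcon).symm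
          rw [if_neg h8]
          omega
        have hj0e : e (Sum.inr H2.choose) ≠ 0 := by rw [hapj0] at hj₀; exact hj₀
        set e'' := e - Finsupp.single (Sum.inr H2.choose) 1 with he''def
        have he'' : e'' + Finsupp.single (Sum.inr H2.choose) 1 = e := sub_add_cancel_single hj0e
        have hlt'' : wtG (Sum.elim w fun _ => (0:ℝ)) e'' < ρ := by
          have h1 := hwtY e'' H2.choose
          rw [he''] at h1
          rw [← h1]; exact hlt
        have hy := hYY H2.choose j e'' hlt''
        rw [he''] at hy
        have hcast : ((e'' (Sum.inr H2.choose) : ℕ) : k) + 1 = ((e (Sum.inr H2.choose) : ℕ) : k) := by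
          have h5 : e'' (Sum.inr H2.choose) + 1 = e (Sum.inr H2.choose) := by
            rw [he''def, app_sub_single, if_pos rfl]
            omega
          exact_mod_cast congrArg (Nat.cast : ℕ → k) h5
        rw [hcast] at hy
        have happj : e'' (Sum.inr j) = e (Sum.inr j) := by
          rw [he''def, app_sub_single, if_neg hne2]
          omega
        rw [happj] at hy
        have hcomm : e'' + Finsupp.single (Sum.inr j) 1
            = (e + Finsupp.single (Sum.inr j) 1) - Finsupp.single (Sum.inr H2.choose) 1 := by
          rw [he''def]
          exact sub_add_single_comm e hne2
        rw [hcomm] at hy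
        rw [hapj0]
        have hcne : ((e (Sum.inr H2.choose) : ℕ) : k) ≠ 0 := Nat.cast_ne_zero.mpr hj0e
        have hcalc : (((e (Sum.inr j) : ℕ) : k) + 1)
            * (((e (Sum.inr H2.choose) : ℕ) : k)⁻¹
              * η' (Sum.inr H2.choose)
                ((e + Finsupp.single (Sum.inr j) 1) - Finsupp.single (Sum.inr H2.choose) 1))
            = η' (Sum.inr j) e := by
          calc (((e (Sum.inr j) : ℕ) : k) + 1)
              * (((e (Sum.inr H2.choose) : ℕ) : k)⁻¹
                * η' (Sum.inr H2.choose)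
                  ((e + Finsupp.single (Sum.inr j) 1) - Finsupp.single (Sum.inr H2.choose) 1))
              = ((e (Sum.inr H2.choose) : ℕ) : k)⁻¹
                * ((((e (Sum.inr j) : ℕ) : k) + 1)
                  * η' (Sum.inr H2.choose)
                    ((e + Finsupp.single (Sum.inr j) 1) - Finsupp.single (Sum.inr H2.choose) 1)) := by
                  ring
            _ = ((e (Sum.inr H2.choose) : ℕ) : k)⁻¹
                * (((e (Sum.inr H2.choose) : ℕ) : k) * η' (Sum.inr j) e) := by rw [← hy]
            _ = η' (Sum.inr j) e := inv_mul_cancel_left₀ hcne _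
        exact hcalc.symm
  -- main case split on resonance
  by_cases hres : ∃ m : Fin r → ℕ, ∀ i, μ i = - ((m i : ℕ) : k)
  · -- RESONANT CASE
    obtain ⟨m, hm⟩ := hres
    set lam : Fin r → k := fun i => η' (Sum.inl i) (EmE m) with hlamdef
    set θ' : Idx r n → MvPowerSeries (Idx r n) k :=
      fun b => dMuFn μ F' b + midForm m lam b with hθ'def
    -- verification
    have hver : ∀ (b : Idx r n) (e : Idx r n →₀ ℕ), wtG (Sum.elim w fun _ => (0:ℝ)) e < ρ →
        η' b e = θ' b e := by
      intro b e hlt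
      rcases b with i | j
      · show η' (Sum.inl i) e
          = ((dMuFn μ F' (Sum.inl i) + midForm m lam (Sum.inl i) : MvPowerSeries (Idx r n) k)) e
        rw [add_coeff, dMuFn_coeff_inl, midForm_coeff_inl]
        by_cases H : ∃ i', μ i' + ((e (Sum.inl i') : ℕ) : k) ≠ 0
        · have hne : e ≠ EmE m := by
            intro hcon
            obtain ⟨i', hi'⟩ := H
            apply hi'
            rw [hcon, EmE_inl, hm i']
            ring
          rw [if_neg hne, mul_zero, add_zero]
          exact hver1 i e hlt H
        · push_neg at H
          rw [H i, zero_mul, zero_add]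
          by_cases H2 : ∃ j', e (Sum.inr j') ≠ 0
          · obtain ⟨j', hj'⟩ := H2
            have hne : e ≠ EmE m := by
              intro hcon
              apply hj'
              rw [hcon, EmE_inr]
            rw [if_neg hne, mul_zero]
            exact hverr i e hlt H j' hj'
          · push_neg at H2
            have heq : e = EmE m := by
              ext s
              rcases s with i' | j'
              · rw [EmE_inl]
                have h5 := H i'
                rw [hm i'] at h5
                have h6 : ((e (Sum.inl i') : ℕ) : k) = ((m i' : ℕ) : k) := by
                  linear_combination h5
                exact_mod_cast h6
              · rw [EmE_inr]; exact H2 j'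
            rw [if_pos heq, mul_one, heq, hlamdef]
      · show η' (Sum.inr j) e
          = ((dMuFn μ F' (Sum.inr j) + midForm m lam (Sum.inr j) : MvPowerSeries (Idx r n) k)) e
        rw [add_coeff, dMuFn_coeff_inr, midForm_coeff_inr, add_zero]
        exact hver2 j e hlt
    -- closedness of θ'
    have hdθ' : ∀ a b, dMu1 μ θ' a b = 0 := by
      intro a b
      rw [hθ'def, dMu1_add, dMu1_ddF, dMu1_mid hm, add_zero]
    set θ : Idx r n → MvPowerSeries (Idx r n) k := fun b => v * θ' b with hθdef
    set F : MvPowerSeries (Idx r n) k := v * F' with hFdef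
    have hηb : ∀ b, η b = v * η' b := by
      intro b
      rw [hη'def, ← mul_assoc, mul_comm v u, huv, one_mul]
    have hdαθ : ∀ a b, dAl1 (alphaForm μ h) θ a b = 0 := by
      intro a b
      rw [hθdef, conj1G μ h v hDv θ' a b, hdθ' a b, mul_zero]
    -- the root W
    have hmi₀ : m i₀ ≠ 0 := by
      intro hcon
      apply hi₀
      rw [hm i₀, hcon]
      norm_num
    obtain ⟨M, hM⟩ : ∃ M, m i₀ = M + 1 := ⟨m i₀ - 1, by omega⟩
    set W : MvPowerSeries (Idx r n) k :=
      ExpS (MvPowerSeries.C (σ := Idx r n) (R := k) (-(((M+1 : ℕ) : k))⁻¹) * h₀) with hWdef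
    have hroot : W ^ (M+1) * u = 1 := by
      rw [hWdef, hudef]
      exact exp_root (fun s : Idx r n => s.isLeft) hh₀ M
    have hWpow : W ^ (m i₀) = v := by
      rw [hM]
      have h1 : W ^ (M+1) = W ^ (M+1) * (u * v) := by rw [huv, mul_one]
      rw [h1, ← mul_assoc, hroot, one_mul]
    have hWunit : IsUnit W := by
      apply IsUnit.of_mul_eq_one (a := W) (W ^ M * u)
      rw [← mul_assoc, ← pow_succ']
      exact hroot
    refine ⟨θ, fun b => η b - θ b, F, ?_, ?_, ?_, ?_, ?_⟩
    · intro b; ring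
    · rw [nu1G_ge_iff]
      intro b e hlt
      have hfac : η b - θ b = v * (η' b - θ' b) := by
        rw [hηb b, hθdef]; ring
      rw [hfac, mul_coeff]
      apply Finset.sum_eq_zero
      intro p hp
      rw [Finset.HasAntidiagonal.mem_antidiagonal] at hp
      have hwt : wtG (Sum.elim w fun _ => (0:ℝ)) p.2 < ρ := by
        have h1 := wt_add (Sum.elim w fun _ => (0:ℝ)) p.1 p.2
        rw [hp] at h1
        have h2 := wt_nonneg _ hWnn p.1
        linarith
      rw [sub_coeff, hver b p.2 hwt, sub_self, mul_zero]
    · intro a b c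
      have hd : ∀ a b : Idx r n, dF1G (fun s : Idx r n => s.isLeft) θ a b
          = w2G (alphaForm μ h) θ b a := by
        intro a b
        have h0 := hdαθ a b
        unfold dAl1 at h0
        unfold w2G dF1G at h0 ⊢
        linear_combination h0
      unfold w12G
      rw [hd b c, hd a c, hd a b]
      unfold w2G
      ring
    · intro hn
      exact absurd ⟨m, hm⟩ hn
    · intro m' hm'
      have hm'm : m' = m := by
        funext i
        have h5 : ((m' i : ℕ) : k) = ((m i : ℕ) : k) := by
          have := (hm' i).symm.trans (hm i)
          linear_combination -this
        exact_mod_cast h5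
      rw [hm'm]
      refine ⟨i₀, W, lam, hmi₀, hWunit, ?_⟩
      intro b
      have h6 : θ b = v * dMuFn μ F' b + v * midForm m lam b := by
        rw [hθdef, hθ'def]; ring
      rw [h6, hFdef, ← conj0G μ h v hDv F' b]
      congr 1
      rcases b with i | j
      · show v * (MvPowerSeries.C (σ := Idx r n) (R := k) (lam i) * xpowM m)
          = MvPowerSeries.C (σ := Idx r n) (R := k) (lam i) * (W ^ (m i₀) * xpowM m)
        rw [hWpow]
        ring
      · show v * 0 = (0 : MvPowerSeries (Idx r n) k)
        rw [mul_zero]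
  · -- NONRESONANT CASE
    set θ' : Idx r n → MvPowerSeries (Idx r n) k := fun b => dMuFn μ F' b with hθ'def
    have hver : ∀ (b : Idx r n) (e : Idx r n →₀ ℕ), wtG (Sum.elim w fun _ => (0:ℝ)) e < ρ →
        η' b e = θ' b e := by
      intro b e hlt
      rcases b with i | j
      · show η' (Sum.inl i) e = dMuFn μ F' (Sum.inl i) e
        rw [dMuFn_coeff_inl]
        by_cases H : ∃ i', μ i' + ((e (Sum.inl i') : ℕ) : k) ≠ 0
        · exact hver1 i e hlt H
        · push_neg at H
          exfalso
          apply hres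
          refine ⟨fun i' => e (Sum.inl i'), fun i' => ?_⟩
          have h5 := H i'
          linear_combination h5
      · show η' (Sum.inr j) e = dMuFn μ F' (Sum.inr j) e
        rw [dMuFn_coeff_inr]
        exact hver2 j e hlt
    have hdθ' : ∀ a b, dMu1 μ θ' a b = 0 := by
      intro a b
      rw [hθ'def]
      exact dMu1_ddF μ F' a b
    set θ : Idx r n → MvPowerSeries (Idx r n) k := fun b => v * θ' b with hθdef
    set F : MvPowerSeries (Idx r n) k := v * F' with hFdef
    have hηb : ∀ b, η b = v * η' b := by
      intro b
      rw [hη'def, ← mul_assoc, mul_comm v u, huv, one_mul]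
    have hdαθ : ∀ a b, dAl1 (alphaForm μ h) θ a b = 0 := by
      intro a b
      rw [hθdef, conj1G μ h v hDv θ' a b, hdθ' a b, mul_zero]
    refine ⟨θ, fun b => η b - θ b, F, ?_, ?_, ?_, ?_, ?_⟩
    · intro b; ring
    · rw [nu1G_ge_iff]
      intro b e hlt
      have hfac : η b - θ b = v * (η' b - θ' b) := by
        rw [hηb b, hθdef]; ring
      rw [hfac, mul_coeff]
      apply Finset.sum_eq_zero
      intro p hp
      rw [Finset.HasAntidiagonal.mem_antidiagonal] at hp
      have hwt : wtG (Sum.elim w fun _ => (0:ℝ)) p.2 < ρ := by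
        have h1 := wt_add (Sum.elim w fun _ => (0:ℝ)) p.1 p.2
        rw [hp] at h1
        have h2 := wt_nonneg _ hWnn p.1
        linarith
      rw [sub_coeff, hver b p.2 hwt, sub_self, mul_zero]
    · intro a b c
      have hd : ∀ a b : Idx r n, dF1G (fun s : Idx r n => s.isLeft) θ a b
          = w2G (alphaForm μ h) θ b a := by
        intro a b
        have h0 := hdαθ a b
        unfold dAl1 at h0
        unfold w2G dF1G at h0 ⊢
        linear_combination h0
      unfold w12G
      rw [hd b c, hd a c, hd a b]
      unfold w2G
      ring
    · intro _ b
      rw [hθdef, hθ'def, hFdef]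
      exact (conj0G μ h v hDv F' b).symm
    · intro m' hm'
      exact absurd ⟨m', hm'⟩ hres
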